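/- For all natural numbers n ≥ 1 and r with 1 ≤ r ≤ n, ∫₀¹ ((H_n − H_{n−r}) + log(1 − x))² · x^{r−1}(1 − x)^{n−r} / B(r, n+1−r) dx = ∑_{k=n+1−r}^{n} 1/k², where B denotes the Beta function and H_m := ∑_{k=1}^{m} 1/k is the m-th harmonic number (H_0 := 0). -/

import Mathlib

/-- `harmonicR m = H_m = ∑_{k=1}^m 1/k`, with `H_0 = 0`. -/
noncomputable def harmonicR (m : ℕ) : ℝ := ∑ k ∈ Finset.range m, (1 : ℝ) / (k + 1)

/-- The Beta function at natural arguments: `B(a, b) = ∫₀¹ t^(a−1) (1−t)^(b−1) dt`. -/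
noncomputable def betaFn (a b : ℕ) : ℝ := ∫ t in (0 : ℝ)..1, t ^ (a - 1) * (1 - t) ^ (b - 1)

open Real Filter Set MeasureTheory intervalIntegral

-- limit lemma
lemma aux_tendsto_pow_log (q j : ℕ) (hq : 1 ≤ q) :
    Tendsto (fun u : ℝ => u ^ q * Real.log u ^ j) (nhdsWithin 0 (Ioi 0)) (nhds 0) := by
  rcases Nat.eq_zero_or_pos j with hj | hj
  · subst hj
    have := ((continuous_pow q).tendsto 0).mono_left (nhdsWithin_le_nhds (s := Ioi (0:ℝ)))
    rw [zero_pow (by omega)] at this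
    simpa using this
  · have hjne : (j:ℝ) ≠ 0 := by exact_mod_cast hj.ne'
    have h1 : Tendsto (fun u : ℝ => (Real.log u * u ^ ((j:ℝ)⁻¹)) ^ j) (nhdsWithin 0 (Ioi 0)) (nhds 0) := by
      have := (tendsto_log_mul_rpow_nhdsGT_zero (r := (j:ℝ)⁻¹) (by positivity)).pow j
      rwa [zero_pow hj.ne'] at this
    have h2 : Tendsto (fun u : ℝ => u ^ (q-1)) (nhdsWithin 0 (Ioi 0)) (nhds (0 ^ (q-1))) :=
      ((continuous_pow (q-1)).tendsto 0).mono_left (nhdsWithin_le_nhds)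
    have h3 := h2.mul h1
    rw [mul_zero] at h3
    refine h3.congr' ?_
    filter_upwards [self_mem_nhdsWithin] with u (hu : 0 < u)
    have he : (Real.log u * u ^ ((j:ℝ)⁻¹)) ^ j = Real.log u ^ j * u := by
      rw [mul_pow, ← Real.rpow_natCast (u ^ ((j:ℝ)⁻¹)) j, ← Real.rpow_mul hu.le,
        inv_mul_cancel₀ hjne, Real.rpow_one]
    rw [he]
    have hq' : q - 1 + 1 = q := Nat.succ_pred_eq_of_pos hq
    rw [mul_comm (Real.log u ^ j) u, ← mul_assoc, ← pow_succ, hq']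

lemma aux_continuousOn_pow_log (q j : ℕ) (hq : 1 ≤ q) :
    ContinuousOn (fun u : ℝ => u ^ q * Real.log u ^ j) (Icc 0 1) := by
  intro u hu
  rcases eq_or_ne u 0 with rfl | hne
  · have hval : (fun u : ℝ => u ^ q * Real.log u ^ j) 0 = 0 := by
      simp [zero_pow (by omega : q ≠ 0)]
    unfold ContinuousWithinAt
    rw [hval]
    have hsub : nhdsWithin (0:ℝ) (Icc 0 1) ≤ nhdsWithin 0 (insert 0 (Ioi 0)) := by
      apply nhdsWithin_mono
      intro x hx
      rcases eq_or_ne x 0 with rfl | h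
      · exact mem_insert _ _
      · exact Or.inr (lt_of_le_of_ne hx.1 (Ne.symm h))
    refine Tendsto.mono_left ?_ hsub
    rw [nhdsWithin_insert]
    refine Tendsto.sup ?_ (aux_tendsto_pow_log q j hq)
    rw [tendsto_pure_left]
    intro s hs
    rw [← hval] at hs
    exact mem_of_mem_nhds hs
  · exact (((continuous_pow q).continuousAt).mul
      ((Real.continuousAt_log hne).pow j)).continuousWithinAt

lemma aux_continuousOn_x (p q j : ℕ) (hq : 1 ≤ q) :
    ContinuousOn (fun x : ℝ => x ^ p * (1 - x) ^ q * Real.log (1 - x) ^ j) (Icc 0 1) := by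
  have h1 : ContinuousOn (fun x : ℝ => (1 - x) ^ q * Real.log (1 - x) ^ j) (Icc 0 1) := by
    refine (aux_continuousOn_pow_log q j hq).comp
      (continuous_const.sub continuous_id).continuousOn ?_
    intro x hx
    exact ⟨by simp [hx.2], by simp [hx.1]⟩
  have := ((continuous_pow p).continuousOn (s := Icc (0:ℝ) 1)).mul h1
  refine this.congr ?_
  intro x _
  simp only [Pi.mul_apply]
  ring

lemma aux_intInt_u (q j : ℕ) (hj : j ≤ 2) :
    IntervalIntegrable (fun u : ℝ => u ^ q * Real.log u ^ j) volume 0 1 := by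
  rw [intervalIntegrable_iff_integrableOn_Ioo_of_le zero_le_one]
  have hg : IntegrableOn (fun u : ℝ => 16 * u ^ (-(1/2 : ℝ))) (Ioo 0 1) := by
    have h := intervalIntegrable_rpow' (a := (0:ℝ)) (b := 1) (r := -(1/2)) (by norm_num)
    rw [intervalIntegrable_iff_integrableOn_Ioo_of_le zero_le_one] at h
    exact h.const_mul 16
  refine Integrable.mono' hg ?_ ?_
  · exact ((measurable_id.pow_const q).mul
      (Real.measurable_log.pow_const j)).aestronglyMeasurable
  · filter_upwards [MeasureTheory.ae_restrict_mem measurableSet_Ioo] with u hu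
    obtain ⟨h0, h1⟩ := hu
    have hlog0 : Real.log u ≤ 0 := Real.log_nonpos h0.le h1.le
    have hrp : (0:ℝ) < u ^ (-(1/4 : ℝ)) := Real.rpow_pos_of_pos h0 _
    have hlog : |Real.log u| ≤ 4 * u ^ (-(1/4 : ℝ)) := by
      have h2 : Real.log (u ^ (-(1/4:ℝ))) ≤ u ^ (-(1/4:ℝ)) - 1 :=
        Real.log_le_sub_one_of_pos hrp
      rw [Real.log_rpow h0] at h2
      rw [abs_of_nonpos hlog0]
      nlinarith
    have step1 : ‖u ^ q * Real.log u ^ j‖ ≤ |Real.log u| ^ j := by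
      rw [Real.norm_eq_abs, abs_mul, abs_pow, abs_pow, abs_of_pos h0]
      calc u ^ q * |Real.log u| ^ j ≤ 1 * |Real.log u| ^ j := by
            apply mul_le_mul_of_nonneg_right (pow_le_one₀ h0.le h1.le) (by positivity)
        _ = |Real.log u| ^ j := one_mul _
    have step2 : |Real.log u| ^ j ≤ (4:ℝ) ^ j * u ^ (-(j:ℝ)/4) := by
      calc |Real.log u| ^ j ≤ (4 * u ^ (-(1/4:ℝ))) ^ j :=
            pow_le_pow_left₀ (abs_nonneg _) hlog j
        _ = (4:ℝ) ^ j * (u ^ (-(1/4:ℝ))) ^ j := mul_pow _ _ _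
        _ = (4:ℝ) ^ j * u ^ (-(j:ℝ)/4) := by
            rw [← Real.rpow_natCast (u ^ (-(1/4:ℝ))) j, ← Real.rpow_mul h0.le]
            norm_num
            ring_nf
    have step3 : (4:ℝ) ^ j * u ^ (-(j:ℝ)/4) ≤ 16 * u ^ (-(1/2:ℝ)) := by
      have e1 : (4:ℝ) ^ j ≤ 16 := by
        calc (4:ℝ) ^ j ≤ (4:ℝ) ^ 2 := pow_le_pow_right₀ (by norm_num) hj
          _ = 16 := by norm_num
      have e2 : u ^ (-(j:ℝ)/4) ≤ u ^ (-(1/2:ℝ)) := by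
        apply Real.rpow_le_rpow_of_exponent_ge h0 h1.le
        have : (j:ℝ) ≤ 2 := by exact_mod_cast hj
        linarith
      have := mul_le_mul e1 e2 (Real.rpow_nonneg h0.le _) (by norm_num)
      exact this
    linarith

lemma aux_intInt_x (p q j : ℕ) (hj : j ≤ 2) :
    IntervalIntegrable (fun x : ℝ => x ^ p * (1 - x) ^ q * Real.log (1 - x) ^ j)
      volume 0 1 := by
  have h1 : IntervalIntegrable (fun x : ℝ => (1 - x) ^ q * Real.log (1 - x) ^ j)
      volume 0 1 := by
    have := (aux_intInt_u q j hj).comp_sub_left 1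
    norm_num at this
    exact this.symm
  have h2 := h1.continuousOn_mul (g := fun x : ℝ => x ^ p)
    ((continuous_pow p).continuousOn)
  simpa [mul_assoc] using h2

noncomputable def Mint (p q j : ℕ) : ℝ :=
  ∫ x in (0:ℝ)..1, x ^ p * (1 - x) ^ q * Real.log (1 - x) ^ j

lemma aux_ibp (a b j : ℕ) (hj : j ≤ 2) :
    (a+1 : ℝ) * Mint a (b+1) j
      = (b+1 : ℝ) * Mint (a+1) b j + (j : ℝ) * Mint (a+1) b (j-1) := by
  set F : ℝ → ℝ := fun x => x ^ (a+1) * (1 - x) ^ (b+1) * Real.log (1 - x) ^ j with hF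
  set f' : ℝ → ℝ := fun x =>
    (a+1 : ℝ) * (x ^ a * (1 - x) ^ (b+1) * Real.log (1 - x) ^ j)
    - (b+1 : ℝ) * (x ^ (a+1) * (1 - x) ^ b * Real.log (1 - x) ^ j)
    - (j : ℝ) * (x ^ (a+1) * (1 - x) ^ b * Real.log (1 - x) ^ (j-1)) with hf'
  have hint1 := (aux_intInt_x a (b+1) j hj).const_mul ((a+1 : ℝ))
  have hint2 := (aux_intInt_x (a+1) b j hj).const_mul ((b+1 : ℝ))
  have hint3 := (aux_intInt_x (a+1) b (j-1) (by omega)).const_mul ((j : ℝ))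
  have hintf' : IntervalIntegrable f' volume 0 1 := (hint1.sub hint2).sub hint3
  have hderiv : ∀ x ∈ Ioo (0:ℝ) 1, HasDerivWithinAt F (f' x) (Ioi x) x := by
    intro x hx
    have hne : (1 : ℝ) - x ≠ 0 := by
      have := hx.2; intro h; linarith [sub_eq_zero.mp h]
    have hid : HasDerivAt (fun y : ℝ => 1 - y) (-1) x := by
      simpa using (hasDerivAt_id x).const_sub 1
    have h1 : HasDerivAt (fun y : ℝ => y ^ (a+1)) ((a+1 : ℝ) * x ^ a) x := by
      simpa using hasDerivAt_pow (a+1) x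
    have h2 : HasDerivAt (fun y : ℝ => (1 - y) ^ (b+1))
        (((b+1 : ℝ) * (1 - x) ^ b) * (-1)) x := by
      have := (hasDerivAt_pow (b+1) (1 - x)).comp x hid
      simpa [Function.comp_def] using this
    have h3 : HasDerivAt (fun y : ℝ => Real.log (1 - y)) ((1 - x)⁻¹ * (-1)) x :=
      (Real.hasDerivAt_log hne).comp x hid
    have h4 : HasDerivAt (fun y : ℝ => Real.log (1 - y) ^ j)
        ((j : ℝ) * Real.log (1 - x) ^ (j-1) * ((1 - x)⁻¹ * (-1))) x := h3.pow j
    have htot := (h1.mul h2).mul h4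
    refine (htot.congr_deriv ?_).hasDerivWithinAt
    have hps : (1 - x) ^ (b+1) = (1 - x) ^ b * (1 - x) := pow_succ _ _
    simp only [hf', Pi.mul_apply]
    field_simp
    ring
  have hcont : ContinuousOn F (Icc 0 1) := aux_continuousOn_x (a+1) (b+1) j (by omega)
  have hFTC : ∫ x in (0:ℝ)..1, f' x = F 1 - F 0 :=
    intervalIntegral.integral_eq_sub_of_hasDeriv_right_of_le zero_le_one hcont hderiv hintf'
  have hF1 : F 1 = 0 := by simp [hF]
  have hF0 : F 0 = 0 := by simp [hF]
  have hsplit : ∫ x in (0:ℝ)..1, f' x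
      = (a+1 : ℝ) * Mint a (b+1) j - (b+1 : ℝ) * Mint (a+1) b j
        - (j : ℝ) * Mint (a+1) b (j-1) := by
    simp only [hf']
    rw [intervalIntegral.integral_sub (hint1.sub hint2) hint3,
      intervalIntegral.integral_sub hint1 hint2,
      intervalIntegral.integral_const_mul, intervalIntegral.integral_const_mul,
      intervalIntegral.integral_const_mul]
    rfl
  rw [hFTC, hF1, hF0] at hsplit
  linarith

lemma aux_contOn_sub (q j : ℕ) (hq : 1 ≤ q) :
    ContinuousOn (fun x : ℝ => (1 - x) ^ q * Real.log (1 - x) ^ j) (Icc 0 1) := by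
  refine (aux_continuousOn_pow_log q j hq).comp
    (continuous_const.sub continuous_id).continuousOn ?_
  intro x hx
  exact ⟨by simp [hx.2], by simp [hx.1]⟩

lemma aux_base0 (b : ℕ) : Mint 0 b 0 = 1 / (b+1 : ℝ) := by
  simp only [Mint, pow_zero, one_mul]
  rw [show (fun x : ℝ => (1 - x) ^ b * 1) = (fun x : ℝ => (fun u : ℝ => u ^ b) (1 - x)) by
    funext x; simp]
  rw [intervalIntegral.integral_comp_sub_left (fun u : ℝ => u ^ b) 1]
  norm_num [integral_pow]

lemma aux_base (b j : ℕ) (hj1 : 1 ≤ j) (hj : j ≤ 2) :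
    (b+1 : ℝ) * Mint 0 b j = -(j : ℝ) * Mint 0 b (j-1) := by
  set F : ℝ → ℝ := fun x => (1 - x) ^ (b+1) * Real.log (1 - x) ^ j with hF
  set f' : ℝ → ℝ := fun x =>
    -(b+1 : ℝ) * ((1 - x) ^ b * Real.log (1 - x) ^ j)
    - (j : ℝ) * ((1 - x) ^ b * Real.log (1 - x) ^ (j-1)) with hf'
  have hmint : ∀ k : ℕ, Mint 0 b k = ∫ x in (0:ℝ)..1, (1 - x) ^ b * Real.log (1 - x) ^ k := by
    intro k; simp only [Mint, pow_zero, one_mul]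
  have hint1' : IntervalIntegrable (fun x : ℝ => (1-x) ^ b * Real.log (1-x) ^ j) volume 0 1 := by
    have := aux_intInt_x 0 b j hj; simpa using this
  have hint2' : IntervalIntegrable (fun x : ℝ => (1-x) ^ b * Real.log (1-x) ^ (j-1)) volume 0 1 := by
    have := aux_intInt_x 0 b (j-1) (by omega); simpa using this
  have hint1 := hint1'.const_mul (-(b+1 : ℝ))
  have hint2 := hint2'.const_mul ((j : ℝ))
  have hintf' : IntervalIntegrable f' volume 0 1 := hint1.sub hint2
  have hderiv : ∀ x ∈ Ioo (0:ℝ) 1, HasDerivWithinAt F (f' x) (Ioi x) x := by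
    intro x hx
    have hne : (1 : ℝ) - x ≠ 0 := by
      have := hx.2; intro h; linarith [sub_eq_zero.mp h]
    have hid : HasDerivAt (fun y : ℝ => 1 - y) (-1) x := by
      simpa using (hasDerivAt_id x).const_sub 1
    have h2 : HasDerivAt (fun y : ℝ => (1 - y) ^ (b+1))
        (((b+1 : ℝ) * (1 - x) ^ b) * (-1)) x := by
      simpa [Function.comp_def] using (hasDerivAt_pow (b+1) (1 - x)).comp x hid
    have h3 : HasDerivAt (fun y : ℝ => Real.log (1 - y)) ((1 - x)⁻¹ * (-1)) x :=
      (Real.hasDerivAt_log hne).comp x hid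
    have h4 : HasDerivAt (fun y : ℝ => Real.log (1 - y) ^ j)
        ((j : ℝ) * Real.log (1 - x) ^ (j-1) * ((1 - x)⁻¹ * (-1))) x := h3.pow j
    have htot := h2.mul h4
    refine (htot.congr_deriv ?_).hasDerivWithinAt
    have hps : (1 - x) ^ (b+1) = (1 - x) ^ b * (1 - x) := pow_succ _ _
    simp only [hf']
    field_simp
    ring
  have hcont : ContinuousOn F (Icc 0 1) := aux_contOn_sub (b+1) j (by omega)
  have hFTC : ∫ x in (0:ℝ)..1, f' x = F 1 - F 0 :=
    intervalIntegral.integral_eq_sub_of_hasDeriv_right_of_le zero_le_one hcont hderiv hintf'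
  have hF1 : F 1 = 0 := by simp [hF]
  have hF0 : F 0 = 0 := by simp [hF, Real.log_one, zero_pow (by omega : j ≠ 0)]
  have hsplit : ∫ x in (0:ℝ)..1, f' x
      = -(b+1 : ℝ) * Mint 0 b j - (j : ℝ) * Mint 0 b (j-1) := by
    simp only [hf']
    rw [intervalIntegral.integral_sub hint1 hint2,
      intervalIntegral.integral_const_mul, intervalIntegral.integral_const_mul,
      ← hmint j, ← hmint (j-1)]
  rw [hFTC, hF1, hF0] at hsplit
  linarith

noncomputable def AB (a b : ℕ) : ℝ :=
  (a.factorial * b.factorial : ℝ) / (a+b+1).factorial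

lemma AB_pos (a b : ℕ) : 0 < AB a b := by
  unfold AB
  positivity

lemma harmonicR_succ (b : ℕ) : harmonicR (b+1) = harmonicR b + 1/((b:ℝ)+1) := by
  unfold harmonicR
  rw [Finset.sum_range_succ]

lemma aux_main (a : ℕ) : ∀ b : ℕ,
    Mint a b 0 = AB a b ∧
    Mint a b 1 = -(harmonicR (a+b+1) - harmonicR b) * AB a b ∧
    Mint a b 2 = ((harmonicR (a+b+1) - harmonicR b)^2
        + ∑ k ∈ Finset.Icc (b+1) (a+b+1), (1:ℝ)/(k:ℝ)^2) * AB a b := by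
  induction a with
  | zero =>
    intro b
    have hob : ((b:ℝ)+1) ≠ 0 := by positivity
    have hAB : AB 0 b = 1/((b:ℝ)+1) := by
      unfold AB
      rw [Nat.factorial, show 0+b+1 = b+1 from by omega, Nat.factorial_succ]
      push_cast
      field_simp
    have h0 : Mint 0 b 0 = 1/((b:ℝ)+1) := aux_base0 b
    have h1 : Mint 0 b 1 = -(1/((b:ℝ)+1)^2) := by
      have hb := aux_base b 1 le_rfl (by norm_num)
      norm_num [h0] at hb
      apply mul_left_cancel₀ hob
      rw [hb]
      field_simp
    have h2 : Mint 0 b 2 = 2/((b:ℝ)+1)^3 := by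
      have hb := aux_base b 2 (by norm_num) le_rfl
      norm_num [h1] at hb
      apply mul_left_cancel₀ hob
      rw [hb]
      field_simp
    have hH : harmonicR (0+b+1) - harmonicR b = 1/((b:ℝ)+1) := by
      rw [show 0+b+1 = b+1 from by omega, harmonicR_succ]; ring
    have hS : ∑ k ∈ Finset.Icc (b+1) (0+b+1), (1:ℝ)/(k:ℝ)^2 = 1/((b:ℝ)+1)^2 := by
      rw [show 0+b+1 = b+1 from by omega, Finset.Icc_self, Finset.sum_singleton]
      push_cast; ring
    refine ⟨by rw [h0, hAB], by rw [h1, hH, hAB]; field_simp, ?_⟩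
    rw [h2, hH, hS, hAB]
    field_simp
    ring
  | succ a ih =>
    intro b
    obtain ⟨ih0, ih1, ih2⟩ := ih (b+1)
    have hob : ((b:ℝ)+1) ≠ 0 := by positivity
    have e1 : a + (b+1) + 1 = a+b+2 := by omega
    have e2 : a + 1 + b + 1 = a+b+2 := by omega
    rw [e1] at ih1 ih2
    have key : ((b:ℝ)+1) * AB (a+1) b = ((a:ℝ)+1) * AB a (b+1) := by
      unfold AB
      rw [show a+1+b+1 = a+b+2 from by omega, show a+(b+1)+1 = a+b+2 from by omega,
        Nat.factorial_succ, Nat.factorial_succ (b)]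
      push_cast
      ring
    set A : ℝ := AB a (b+1) with hA
    set A' : ℝ := AB (a+1) b with hA'
    set C : ℝ := harmonicR (a+b+2) - harmonicR (b+1) with hC
    have hC' : harmonicR (a+1+b+1) - harmonicR b = C + 1/((b:ℝ)+1) := by
      rw [e2, hC]
      linarith [harmonicR_succ b]
    have hseq : Finset.Icc (b+1) (a+1+b+1) = insert (b+1) (Finset.Icc (b+1+1) (a+b+2)) := by
      ext k
      simp only [Finset.mem_Icc, Finset.mem_insert]
      omega
    have hS : ∑ k ∈ Finset.Icc (b+1) (a+1+b+1), (1:ℝ)/(k:ℝ)^2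
        = 1/((b:ℝ)+1)^2 + ∑ k ∈ Finset.Icc (b+1+1) (a+b+2), (1:ℝ)/(k:ℝ)^2 := by
      rw [hseq, Finset.sum_insert (by simp)]
      push_cast
      ring
    set S : ℝ := ∑ k ∈ Finset.Icc (b+1+1) (a+b+2), (1:ℝ)/(k:ℝ)^2 with hSdef
    -- j = 0
    have ibp0 := aux_ibp a b 0 (by norm_num)
    norm_num [ih0] at ibp0
    have g0 : Mint (a+1) b 0 = A' := by
      have : ((b:ℝ)+1) * Mint (a+1) b 0 = ((b:ℝ)+1) * A' := by
        rw [key]; push_cast at ibp0 ⊢; linarith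
      exact mul_left_cancel₀ hob this
    -- j = 1
    have ibp1 := aux_ibp a b 1 (by norm_num)
    norm_num [ih1, g0] at ibp1
    have g1 : Mint (a+1) b 1 = -(C + 1/((b:ℝ)+1)) * A' := by
      have hb2 : ((b:ℝ)+1) * Mint (a+1) b 1
          = ((b:ℝ)+1) * (-(C + 1/((b:ℝ)+1)) * A') := by
        have expand : ((b:ℝ)+1) * (-(C + 1/((b:ℝ)+1)) * A')
            = -C * (((b:ℝ)+1) * A') - A' := by field_simp; ring
        rw [expand, key]
        push_cast at ibp1 ⊢
        linarith
      exact mul_left_cancel₀ hob hb2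
    -- j = 2
    have ibp2 := aux_ibp a b 2 (by norm_num)
    norm_num [ih2, g1] at ibp2
    have g2 : Mint (a+1) b 2 = ((C + 1/((b:ℝ)+1))^2 + (1/((b:ℝ)+1)^2 + S)) * A' := by
      have hb2 : ((b:ℝ)+1) * Mint (a+1) b 2
          = ((b:ℝ)+1) * (((C + 1/((b:ℝ)+1))^2 + (1/((b:ℝ)+1)^2 + S)) * A') := by
        have expand : ((b:ℝ)+1) * (((C + 1/((b:ℝ)+1))^2 + (1/((b:ℝ)+1)^2 + S)) * A')
            = (C^2 + S) * (((b:ℝ)+1) * A') + 2 * C * A' + 2 * A' / ((b:ℝ)+1) := by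
          field_simp; ring
        rw [expand, key]
        push_cast at ibp2 ⊢
        linear_combination -ibp2
      exact mul_left_cancel₀ hob hb2
    refine ⟨g0, ?_, ?_⟩
    · rw [g1, hC']
    · rw [g2, hC', hS]

/-- **MSE of α̂.** The mean squared error of the plug-in AURC weight
`α̂ = H_n − H_{n−r}` under `β ∼ Beta(r, n+1−r)` equals `∑_{k=n+1−r}^{n} 1/k²`. -/
theorem mse_alpha_hat (n r : ℕ) (hn : 1 ≤ n) (hr1 : 1 ≤ r) (hrn : r ≤ n) :
    ∫ x in (0 : ℝ)..1,
        ((harmonicR n - harmonicR (n - r)) + Real.log (1 - x)) ^ 2 *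
          (x ^ (r - 1) * (1 - x) ^ (n - r) / betaFn r (n + 1 - r))
      = ∑ k ∈ Finset.Icc (n + 1 - r) n, (1 : ℝ) / (k : ℝ) ^ 2 := by
  obtain ⟨a, rfl⟩ : ∃ a, r = a + 1 := ⟨r - 1, by omega⟩
  obtain ⟨b, rfl⟩ : ∃ b, n = a + b + 1 := ⟨n - (a + 1), by omega⟩
  have en1 : a + b + 1 - (a + 1) = b := by omega
  have en2 : a + b + 1 + 1 - (a + 1) = b + 1 := by omega
  have en3 : a + 1 - 1 = a := by omega
  rw [en1, en2, en3]
  obtain ⟨m0, m1, m2⟩ := aux_main a b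
  have hB : betaFn (a+1) (b+1) = AB a b := by
    rw [← m0]
    simp only [betaFn, Mint, Nat.add_sub_cancel, pow_zero, mul_one]
  set c : ℝ := harmonicR (a + b + 1) - harmonicR b with hc
  set S : ℝ := ∑ k ∈ Finset.Icc (b + 1) (a + b + 1), (1:ℝ)/(k:ℝ)^2 with hS
  have hABpos := AB_pos a b
  have hABne : AB a b ≠ 0 := ne_of_gt hABpos
  have hfun : (fun x : ℝ => (c + Real.log (1 - x)) ^ 2 *
        (x ^ a * (1 - x) ^ b / betaFn (a+1) (b+1)))
      = fun x : ℝ => (c^2 * (x ^ a * (1 - x) ^ b * Real.log (1 - x) ^ 0)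
          + 2*c * (x ^ a * (1 - x) ^ b * Real.log (1 - x) ^ 1)
          + x ^ a * (1 - x) ^ b * Real.log (1 - x) ^ 2) / AB a b := by
    funext x
    rw [hB]
    field_simp
    ring
  rw [hfun, intervalIntegral.integral_div]
  have hi0 := (aux_intInt_x a b 0 (by norm_num)).const_mul (c^2)
  have hi1 := (aux_intInt_x a b 1 (by norm_num)).const_mul (2*c)
  have hi2 := aux_intInt_x a b 2 le_rfl
  rw [intervalIntegral.integral_add (hi0.add hi1) hi2,
    intervalIntegral.integral_add hi0 hi1,
    intervalIntegral.integral_const_mul, intervalIntegral.integral_const_mul]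
  have e0 : (∫ x in (0:ℝ)..1, x ^ a * (1 - x) ^ b * Real.log (1 - x) ^ 0) = Mint a b 0 := rfl
  have e1 : (∫ x in (0:ℝ)..1, x ^ a * (1 - x) ^ b * Real.log (1 - x) ^ 1) = Mint a b 1 := rfl
  have e2 : (∫ x in (0:ℝ)..1, x ^ a * (1 - x) ^ b * Real.log (1 - x) ^ 2) = Mint a b 2 := rfl
  rw [e0, e1, e2, m0, m1, m2]
  field_simp
  ring
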